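/- Let S be a factorizable Boolean sublattice. Then S is an LFS if and only if the Boolean sublattice ⟨A(S) \ A_I(S)⟩ generated by the non-isolated quarks of S is an LFS. -/

import Mathlib

open scoped ENNReal

/-- A Boolean sublattice: a set of finite subsets of `ℕ` that contains `∅` and is
closed under binary unions (ordered by inclusion, with joins given by unions). -/
def IsBSL (S : Set (Finset ℕ)) : Prop :=
  ∅ ∈ S ∧ ∀ A ∈ S, ∀ B ∈ S, A ∪ B ∈ S

/-- A quark of `S`: a nonempty element of `S` covering `∅` in `S`, i.e. there is no
`B ∈ S` with `∅ ⊊ B ⊊ A`. -/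
def IsQuark (S : Set (Finset ℕ)) (A : Finset ℕ) : Prop :=
  A ∈ S ∧ A ≠ ∅ ∧ ∀ B ∈ S, B ≠ ∅ → ¬ B ⊂ A

/-- `z` is a factorization of `X` into quarks of `S`: a finite set of quarks whose
union is `X` such that no proper subset of `z` has union `X`. -/
def IsFactorization (S : Set (Finset ℕ)) (X : Finset ℕ) (z : Finset (Finset ℕ)) : Prop :=
  (∀ A ∈ z, IsQuark S A) ∧ z.sup id = X ∧ ∀ w, w ⊂ z → w.sup id ≠ X

/-- The set `Z(X)` of factorizations of `X` in `S`. -/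
def Factorizations (S : Set (Finset ℕ)) (X : Finset ℕ) : Set (Finset (Finset ℕ)) :=
  {z | IsFactorization S X z}

/-- `S` is factorizable: every nonempty element of `S` has a factorization. -/
def Factorizable (S : Set (Finset ℕ)) : Prop :=
  ∀ X ∈ S, X ≠ ∅ → (Factorizations S X).Nonempty

/-- `S` is a unique factorization semilattice: every nonempty element of `S` has
exactly one factorization. -/
def IsUFS (S : Set (Finset ℕ)) : Prop :=
  ∀ X ∈ S, X ≠ ∅ → ∃! z, z ∈ Factorizations S X

/-- `S` is a half-factorial semilattice: for every nonempty `X ∈ S` the set of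
factorization lengths of `X` is a singleton. -/
def IsHFS (S : Set (Finset ℕ)) : Prop :=
  ∀ X ∈ S, X ≠ ∅ → (Factorizations S X).Nonempty ∧
    ∀ z ∈ Factorizations S X, ∀ z' ∈ Factorizations S X, z.card = z'.card

/-- `S` is a length-factorial semilattice: two distinct factorizations of the same
nonempty element of `S` have different cardinalities. -/
def IsLFS (S : Set (Finset ℕ)) : Prop :=
  ∀ X ∈ S, X ≠ ∅ → ∀ z ∈ Factorizations S X, ∀ z' ∈ Factorizations S X,
    z.card = z'.card → z = z'

/-- The Boolean sublattice generated by a collection `𝒜` of finite subsets of `ℕ`: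
the smallest set of finite subsets of `ℕ` containing `{∅} ∪ 𝒜` and closed under
binary unions. -/
def genBSL (𝒜 : Set (Finset ℕ)) : Set (Finset ℕ) :=
  ⋂₀ {T | IsBSL T ∧ 𝒜 ⊆ T}

/-- An isolated quark: a quark disjoint from every other quark of `S`. -/
def IsIsolatedQuark (S : Set (Finset ℕ)) (A : Finset ℕ) : Prop :=
  IsQuark S A ∧ ∀ B, IsQuark S B → B ≠ A → Disjoint A B

/-- An excess quark: a quark each of whose elements belongs to some other quark. -/
def IsExcessQuark (S : Set (Finset ℕ)) (A : Finset ℕ) : Prop :=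
  IsQuark S A ∧ ∀ j ∈ A, ∃ B, IsQuark S B ∧ B ≠ A ∧ j ∈ B

/-- The quarkic graph of `S`: vertices are the quarks of `S`, with an edge between
distinct quarks having nonempty intersection. -/
def quarkicGraph (S : Set (Finset ℕ)) : SimpleGraph {A : Finset ℕ // IsQuark S A} :=
  SimpleGraph.fromRel (fun A B => ((A : Finset ℕ) ∩ (B : Finset ℕ)).Nonempty)

/-- The vertex set `V(C)` of a connected component of the quarkic graph, as a set of
finite subsets of `ℕ`. -/
def compVerts (S : Set (Finset ℕ)) (C : (quarkicGraph S).ConnectedComponent) :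
    Set (Finset ℕ) :=
  Subtype.val '' C.supp

/-- The pairing graph of `S` (for `S` with quarks of size at most 2): vertices are `ℕ`,
with an edge between distinct `a`, `b` whenever `{a, b}` is a quark of `S`. -/
def pairingGraph (S : Set (Finset ℕ)) : SimpleGraph ℕ :=
  SimpleGraph.fromRel (fun a b => IsQuark S {a, b})

/-- The edge set of a connected component `C` of the pairing graph, each edge `{a,b}`
regarded as the 2-element subset `{a, b}` of `ℕ`. -/
def compEdgeSets (S : Set (Finset ℕ)) (C : (pairingGraph S).ConnectedComponent) :
    Set (Finset ℕ) :=
  {A | ∃ a b : ℕ, (pairingGraph S).Adj a b ∧ a ∈ C.supp ∧ A = {a, b}}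

/-- `v` has degree at least `n` in `G` (valid also for infinite graphs). -/
def DegAtLeast {V : Type*} (G : SimpleGraph V) (v : V) (n : ℕ) : Prop :=
  ∃ s : Finset V, s.card = n ∧ ∀ u ∈ s, G.Adj v u

/-- `v` has degree exactly `n` in `G`: its neighbor set is a finite set of size `n`. -/
def DegExactly {V : Type*} (G : SimpleGraph V) (v : V) (n : ℕ) : Prop :=
  ∃ s : Finset V, s.card = n ∧ ∀ u, G.Adj v u ↔ u ∈ s

/-- A leaf: a vertex of degree exactly 1. -/
def IsLeaf {V : Type*} (G : SimpleGraph V) (v : V) : Prop := DegExactly G v 1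

/-- A candy graph: a connected simple graph of diameter at most 4 that contains a
cycle of length `k` if and only if `k = 4`. -/
def IsCandy {V : Type*} (G : SimpleGraph V) : Prop :=
  G.Connected ∧
  (∀ u v : V, ∃ p : G.Walk u v, p.length ≤ 4) ∧
  (∀ k : ℕ, (∃ (v : V) (c : G.Walk v v), c.IsCycle ∧ c.length = k) ↔ k = 4)

/-- The connected component `C` of `G` contains no cycle. -/
def CompAcyclic {V : Type*} (G : SimpleGraph V) (C : G.ConnectedComponent) : Prop :=
  ∀ v ∈ C.supp, ∀ c : G.Walk v v, ¬ c.IsCycle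

/-- Every path inside the connected component `C` has length at most `d` (for a tree
component this says its diameter is at most `d`). -/
def CompDiamLe {V : Type*} (G : SimpleGraph V) (C : G.ConnectedComponent) (d : ℕ) : Prop :=
  ∀ (u v : V), u ∈ C.supp → ∀ p : G.Walk u v, p.IsPath → p.length ≤ d

/-- The connected component `C` of `G` is (as an induced subgraph) the cycle graph on
`n` vertices. -/
def CompIsCycleGraph {V : Type*} (G : SimpleGraph V) (C : G.ConnectedComponent)
    (n : ℕ) : Prop :=
  ∃ v : Fin n → V, Function.Injective v ∧ C.supp = Set.range v ∧
    ∀ i j : Fin n, G.Adj (v i) (v j) ↔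
      ((j : ℕ) = ((i : ℕ) + 1) % n ∨ (i : ℕ) = ((j : ℕ) + 1) % n)

/-- The connected component `C` of `G` is (as an induced subgraph) a candy graph:
it has diameter at most 4 and contains a cycle of length `k` iff `k = 4`. -/
def CompIsCandy {V : Type*} (G : SimpleGraph V) (C : G.ConnectedComponent) : Prop :=
  (∀ u v, u ∈ C.supp → v ∈ C.supp → ∃ p : G.Walk u v, p.length ≤ 4) ∧
  (∀ k : ℕ, (∃ v ∈ C.supp, ∃ c : G.Walk v v, c.IsCycle ∧ c.length = k) ↔ k = 4)

/-- The set of factorization lengths `L(X)` of `X` in `S`. -/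
def lengthsOf (S : Set (Finset ℕ)) (X : Finset ℕ) : Set ℕ :=
  Finset.card '' Factorizations S X

/-- The elasticity `ρ(X) = sup L(X) / min L(X)` of a nonempty element `X` of `S`,
valued in the extended nonnegative reals. -/
noncomputable def elasticityOf (S : Set (Finset ℕ)) (X : Finset ℕ) : ℝ≥0∞ :=
  (⨆ n ∈ lengthsOf S X, (n : ℝ≥0∞)) / ((sInf (lengthsOf S X) : ℕ) : ℝ≥0∞)

/-- The elasticity `ρ(S)` of a Boolean sublattice `S`. -/
noncomputable def elasticity (S : Set (Finset ℕ)) : ℝ≥0∞ :=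
  ⨆ X ∈ {X | X ∈ S ∧ X ≠ ∅}, elasticityOf S X

private lemma genBSL_isBSL (𝒜 : Set (Finset ℕ)) : IsBSL (genBSL 𝒜) := by
  constructor
  · exact Set.mem_sInter.2 fun T hT => hT.1.1
  · intro A hA B hB
    exact Set.mem_sInter.2 fun T hT =>
      hT.1.2 A (Set.mem_sInter.1 hA T hT) B (Set.mem_sInter.1 hB T hT)

private lemma subset_genBSL (𝒜 : Set (Finset ℕ)) : 𝒜 ⊆ genBSL 𝒜 :=
  fun _ hA => Set.mem_sInter.2 fun _ hT => hT.2 hA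

private lemma genBSL_subset {𝒜 T : Set (Finset ℕ)} (hT : IsBSL T) (h : 𝒜 ⊆ T) :
    genBSL 𝒜 ⊆ T := fun _ hx => Set.mem_sInter.1 hx T ⟨hT, h⟩

private lemma bsl_sup_mem {T : Set (Finset ℕ)} (hT : IsBSL T)
    (t : Finset (Finset ℕ)) (h : ∀ A ∈ t, A ∈ T) : t.sup id ∈ T := by
  classical
  induction t using Finset.induction_on with
  | empty => simpa using hT.1
  | insert _ _ hB ih =>
    rw [Finset.sup_insert]
    exact hT.2 _ (h _ (Finset.mem_insert_self _ _)) _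
      (ih fun A hA => h A (Finset.mem_insert_of_mem hA))

private lemma mem_genBSL_elim {𝒜 : Set (Finset ℕ)} {X : Finset ℕ} (hX : X ∈ genBSL 𝒜) :
    ∃ t : Finset (Finset ℕ), (∀ A ∈ t, A ∈ 𝒜) ∧ t.sup id = X := by
  classical
  have hT : IsBSL {X : Finset ℕ | ∃ t : Finset (Finset ℕ), (∀ A ∈ t, A ∈ 𝒜) ∧ t.sup id = X} := by
    constructor
    · exact ⟨∅, by simp, by simp⟩
    · rintro A ⟨t, ht, rfl⟩ B ⟨u, hu, rfl⟩
      refine ⟨t ∪ u, fun C hC => (Finset.mem_union.1 hC).elim (ht C) (hu C), ?_⟩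
      simp [Finset.sup_union]
  refine genBSL_subset hT (fun A hA => ⟨{A}, ?_, by simp⟩) hX
  intro B hB
  simpa using Finset.mem_singleton.1 hB ▸ hA

/-- A factorizable Boolean sublattice `S` is an LFS iff the Boolean
sublattice generated by its non-isolated quarks is an LFS. -/
theorem stmt_17 (S : Set (Finset ℕ)) (hS : IsBSL S) (hfac : Factorizable S) :
    IsLFS S ↔ IsLFS (genBSL {A | IsQuark S A ∧ ¬ IsIsolatedQuark S A}) := by
  classical
  set N : Set (Finset ℕ) := {A | IsQuark S A ∧ ¬ IsIsolatedQuark S A} with hNdef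
  set S' : Set (Finset ℕ) := genBSL N with hS'def
  have hNS : N ⊆ S := fun A hA => hA.1.1
  have hS'BSL : IsBSL S' := genBSL_isBSL N
  have hNS' : N ⊆ S' := subset_genBSL N
  have hsub : S' ⊆ S := genBSL_subset hS hNS
  -- quarks of S' are exactly the non-isolated quarks of S
  have hquark : ∀ A, IsQuark S' A ↔ A ∈ N := by
    intro A
    constructor
    · rintro ⟨hAS', hAne, hmin⟩
      obtain ⟨t, ht, hsup⟩ := mem_genBSL_elim hAS'
      have htne : t.Nonempty := by
        rcases Finset.eq_empty_or_nonempty t with rfl | h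
        · simp at hsup; exact absurd hsup.symm hAne
        · exact h
      obtain ⟨B, hBt⟩ := htne
      have hBN : B ∈ N := ht B hBt
      have hBsub : B ⊆ A := by
        have := Finset.le_sup (f := id) hBt
        rw [hsup] at this; exact this
      have hBA : B = A := by
        by_contra hne
        exact hmin B (hNS' hBN) hBN.1.2.1 (lt_of_le_of_ne hBsub hne)
      exact hBA ▸ hBN
    · intro hA
      exact ⟨hNS' hA, hA.1.2.1, fun B hB hBne => hA.1.2.2 B (hsub hB) hBne⟩
  constructor
  · -- easy direction: factorizations in S' are factorizations in S
    intro h X hX hXne z hz z' hz' hcard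
    have key : ∀ w, w ∈ Factorizations S' X → w ∈ Factorizations S X := by
      rintro w ⟨h1, h2, h3⟩
      exact ⟨fun A hA => ((hquark A).1 (h1 A hA)).1, h2, h3⟩
    exact h X (hsub hX) hXne z (key z hz) z' (key z' hz') hcard
  · intro h X hX hXne z hz z' hz' hcard
    have hzf : IsFactorization S X z := hz
    have hzf' : IsFactorization S X z' := hz'
    -- an isolated quark belongs to a factorization of X iff it is contained in X
    have isomem : ∀ w, IsFactorization S X w → ∀ A, IsIsolatedQuark S A → (A ∈ w ↔ A ⊆ X) := by
      intro w hw A hA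
      constructor
      · intro hAw
        have := Finset.le_sup (f := id) hAw
        rw [hw.2.1] at this; exact this
      · intro hAX
        obtain ⟨a, ha⟩ := Finset.nonempty_iff_ne_empty.2 hA.1.2.1
        have haX : a ∈ w.sup id := by rw [hw.2.1]; exact hAX ha
        obtain ⟨B, hBw, haB⟩ := Finset.mem_sup.1 haX
        have hBq := hw.1 B hBw
        by_contra hAnw
        have hne : B ≠ A := fun e => hAnw (e ▸ hBw)
        exact (Finset.disjoint_left.1 (hA.2 B hBq hne) ha) haB
    set P : Finset ℕ → Prop := fun A => IsIsolatedQuark S A with hPdef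
    set zI : Finset (Finset ℕ) := z.filter P with hzIdef
    set zN : Finset (Finset ℕ) := z.filter (fun A => ¬ P A) with hzNdef
    set zI' : Finset (Finset ℕ) := z'.filter P with hzI'def
    set zN' : Finset (Finset ℕ) := z'.filter (fun A => ¬ P A) with hzN'def
    have hsplit : zI ∪ zN = z := Finset.filter_union_filter_not_eq P z
    have hsplit' : zI' ∪ zN' = z' := Finset.filter_union_filter_not_eq P z'
    have hzIeq : zI = zI' := by
      ext A
      simp only [hzIdef, hzI'def, Finset.mem_filter]
      constructor
      · rintro ⟨hAz, hAP⟩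
        exact ⟨(isomem z' hzf' A hAP).2 ((isomem z hzf A hAP).1 hAz), hAP⟩
      · rintro ⟨hAz', hAP⟩
        exact ⟨(isomem z hzf A hAP).2 ((isomem z' hzf' A hAP).1 hAz'), hAP⟩
    -- the sup of the non-isolated part equals X minus the sup of the isolated part
    have hYsd : ∀ w, IsFactorization S X w →
        (w.filter (fun A => ¬ P A)).sup id = X \ (w.filter P).sup id := by
      intro w hw
      ext a
      simp only [Finset.mem_sdiff]
      constructor
      · intro haY
        obtain ⟨B, hB, haB⟩ := Finset.mem_sup.1 haY
        have hBz : B ∈ w := (Finset.mem_filter.1 hB).1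
        have hBnP : ¬ P B := (Finset.mem_filter.1 hB).2
        constructor
        · rw [← hw.2.1]
          exact Finset.mem_sup.2 ⟨B, hBz, haB⟩
        · intro haW
          obtain ⟨A, hA, haA⟩ := Finset.mem_sup.1 haW
          have hAP : P A := (Finset.mem_filter.1 hA).2
          have hne : B ≠ A := fun e => hBnP (e ▸ hAP)
          exact (Finset.disjoint_left.1 (hAP.2 B (hw.1 B hBz) hne) haA) haB
      · rintro ⟨haX, haW⟩
        rw [← hw.2.1] at haX
        obtain ⟨C, hCz, haC⟩ := Finset.mem_sup.1 haX
        by_cases hCP : P C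
        · exact absurd (Finset.mem_sup.2 ⟨C, Finset.mem_filter.2 ⟨hCz, hCP⟩, haC⟩) haW
        · exact Finset.mem_sup.2 ⟨C, Finset.mem_filter.2 ⟨hCz, hCP⟩, haC⟩
    have hYeq : zN.sup id = zN'.sup id := by
      rw [hYsd z hzf, hYsd z' hzf', show Finset.filter P z = Finset.filter P z' from hzIeq]
    have hcardN : zN.card = zN'.card := by
      have h1 := Finset.card_filter_add_card_filter_not (s := z) (p := P)
      have h2 := Finset.card_filter_add_card_filter_not (s := z') (p := P)
      rw [← hzIdef, ← hzNdef] at h1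
      rw [← hzI'def, ← hzN'def] at h2
      have h3 : zI.card = zI'.card := by rw [hzIeq]
      omega
    -- the non-isolated part is a factorization in S'
    have factN : ∀ w, IsFactorization S X w →
        IsFactorization S' ((w.filter (fun A => ¬ P A)).sup id) (w.filter (fun A => ¬ P A)) := by
      intro w hw
      refine ⟨?_, rfl, ?_⟩
      · intro A hA
        have h1 := Finset.mem_filter.1 hA
        exact (hquark A).2 ⟨hw.1 A h1.1, h1.2⟩
      · intro u hu hsup
        have husub : u ∪ w.filter P ⊆ w := by
          intro B hB
          rcases Finset.mem_union.1 hB with hB | hB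
          · exact (Finset.mem_filter.1 (hu.1 hB)).1
          · exact (Finset.mem_filter.1 hB).1
        obtain ⟨B, hBN, hBu⟩ := Finset.exists_of_ssubset hu
        have hBnotin : B ∉ u ∪ w.filter P := by
          intro hB
          rcases Finset.mem_union.1 hB with hB | hB
          · exact hBu hB
          · exact (Finset.mem_filter.1 hBN).2 (Finset.mem_filter.1 hB).2
        have hss : u ∪ w.filter P ⊂ w :=
          ⟨husub, fun hws => hBnotin (hws (Finset.mem_filter.1 hBN).1)⟩
        apply hw.2.2 _ hss
        rw [Finset.sup_union, hsup]
        have : (w.filter (fun A => ¬ P A)).sup id ⊔ (w.filter P).sup id = w.sup id := by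
          rw [← Finset.sup_union, Finset.union_comm, Finset.filter_union_filter_not_eq P w]
        rw [this, hw.2.1]
    by_cases hY : zN.sup id = ∅
    · -- no non-isolated quarks: z = zI = zI' = z'
      have hzNempty : zN = ∅ := by
        by_contra hne
        obtain ⟨B, hB⟩ := Finset.nonempty_iff_ne_empty.2 hne
        have hBz : B ∈ z := (Finset.mem_filter.1 hB).1
        have hBne : B ≠ ∅ := (hzf.1 B hBz).2.1
        have hBsub : B ⊆ zN.sup id := Finset.le_sup (f := id) hB
        rw [hY] at hBsub
        exact hBne (Finset.subset_empty.1 hBsub)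
      have hzN'empty : zN' = ∅ := Finset.card_eq_zero.1 (by rw [← hcardN, hzNempty]; simp)
      calc z = zI ∪ zN := hsplit.symm
        _ = zI' ∪ zN' := by rw [hzIeq, hzNempty, hzN'empty]
        _ = z' := hsplit'
    · have hYS' : zN.sup id ∈ S' := by
        apply bsl_sup_mem hS'BSL
        intro B hB
        have h1 := Finset.mem_filter.1 hB
        exact hNS' ⟨hzf.1 B h1.1, h1.2⟩
      have hf1 : zN ∈ Factorizations S' (zN.sup id) := factN z hzf
      have hf2 : zN' ∈ Factorizations S' (zN.sup id) := by
        have := factN z' hzf'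
        rw [← hYeq] at this
        exact this
      have : zN = zN' := h (zN.sup id) hYS' hY zN hf1 zN' hf2 hcardN
      calc z = zI ∪ zN := hsplit.symm
        _ = zI' ∪ zN' := by rw [hzIeq, this]
        _ = z' := hsplit'
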